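/- For every nonnegative integer n and complex t with |t| < 1, t ≠ 0: ₂F₁(1/2, 1; 2 + n; t) = (2(n+1)!/((3/2)_n · √(1-t))) · ((t-1)/t)^{n+1} · [1 - (1/√(1-t)) · ∑_{k=0}^{n} ((1/2)_k / k!) (t/(t-1))^k]. -/

import Mathlib

open scoped BigOperators

/-- Pochhammer symbol `(a)_k` on `ℂ`. -/
noncomputable def pochC (a : ℂ) (k : ℕ) : ℂ := ∏ i ∈ Finset.range k, (a + i)

/-- Gauss hypergeometric series `₂F₁(a,b;c;z)`. -/
noncomputable def hyp2F1 (a b c z : ℂ) : ℂ :=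
  ∑' k : ℕ, pochC a k * pochC b k / (pochC c k * (k.factorial : ℂ)) * z ^ k

noncomputable def prR (x : ℝ) (k : ℕ) : ℝ := ∏ i ∈ Finset.range k, (x + i)

lemma pochC_zero (a : ℂ) : pochC a 0 = 1 := by simp [pochC]

lemma pochC_succ (a : ℂ) (k : ℕ) : pochC a (k+1) = pochC a k * (a + k) :=
  Finset.prod_range_succ _ _

lemma pochC_succ' (a : ℂ) (k : ℕ) : pochC a (k+1) = a * pochC (a+1) k := by
  rw [pochC, Finset.prod_range_succ', pochC]
  simp [mul_comm, add_assoc, add_comm (1:ℂ)]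

lemma prR_zero (x : ℝ) : prR x 0 = 1 := by simp [prR]

lemma prR_succ (x : ℝ) (k : ℕ) : prR x (k+1) = prR x k * (x + k) :=
  Finset.prod_range_succ _ _

lemma pochC_ofReal (x : ℝ) (k : ℕ) : pochC (x : ℂ) k = ((prR x k : ℝ) : ℂ) := by
  induction k with
  | zero => simp [pochC_zero, prR_zero]
  | succ k ih => rw [pochC_succ, prR_succ, ih]; push_cast; ring

lemma prR_pos {x : ℝ} (hx : 0 < x) (k : ℕ) : 0 < prR x k := by
  induction k with
  | zero => simp [prR_zero]
  | succ k ih => rw [prR_succ]; positivity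

lemma prR_mono {x y : ℝ} (hx : 0 < x) (hxy : x ≤ y) (k : ℕ) : prR x k ≤ prR y k := by
  induction k with
  | zero => simp [prR_zero]
  | succ k ih =>
    rw [prR_succ, prR_succ]
    have h1 : (0:ℝ) ≤ x + k := by positivity
    have := prR_pos hx k
    nlinarith [prR_pos (hx.trans_le hxy) k]

lemma prR_one (k : ℕ) : prR 1 k = k.factorial := by
  induction k with
  | zero => simp [prR_zero]
  | succ k ih => rw [prR_succ, ih, Nat.factorial_succ]; push_cast; ring

lemma prR_two (k : ℕ) : prR 2 k = (k+1).factorial := by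
  induction k with
  | zero => simp [prR_zero]
  | succ k ih =>
    rw [prR_succ, ih, show k+1+1 = (k+1)+1 from rfl, Nat.factorial_succ (k+1)]
    push_cast; ring

lemma pochC_one (k : ℕ) : pochC 1 k = k.factorial := by
  have := pochC_ofReal 1 k
  rw [prR_one] at this; simpa using this

lemma pochC_two (k : ℕ) : pochC 2 k = (k+1).factorial := by
  have := pochC_ofReal 2 k
  rw [prR_two] at this; simpa using this

lemma pochC_ne_zero {x : ℝ} (hx : 0 < x) (k : ℕ) : pochC (x : ℂ) k ≠ 0 := by
  rw [pochC_ofReal]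
  exact_mod_cast (prR_pos hx k).ne'

lemma norm_pochC (x : ℝ) (hx : 0 < x) (k : ℕ) : ‖pochC (x:ℂ) k‖ = prR x k := by
  rw [pochC_ofReal, Complex.norm_real, Real.norm_eq_abs, abs_of_pos (prR_pos hx k)]

/-- coefficients of ₂F₁(1/2,1;n+2;·) -/
noncomputable def aC (n k : ℕ) : ℂ := pochC (1/2) k / pochC ((n:ℂ)+2) k

noncomputable def FC (n : ℕ) (t : ℂ) : ℂ := ∑' k : ℕ, aC n k * t^k

lemma pochC_half_ne (k : ℕ) : pochC (1/2 : ℂ) k ≠ 0 := by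
  have : ((1/2 : ℝ) : ℂ) = (1/2 : ℂ) := by push_cast; ring
  rw [← this]; exact pochC_ne_zero (by norm_num) k

lemma pochC_n2_ne (n k : ℕ) : pochC ((n:ℂ)+2) k ≠ 0 := by
  have : (((n:ℝ)+2 : ℝ) : ℂ) = ((n:ℂ)+2) := by push_cast; ring
  rw [← this]; exact pochC_ne_zero (by positivity) k

lemma norm_aC_le (n k : ℕ) : ‖aC n k‖ ≤ 1 := by
  have h1 : ‖pochC (1/2 : ℂ) k‖ = prR (1/2) k := by
    have : ((1/2 : ℝ) : ℂ) = (1/2 : ℂ) := by push_cast; ring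
    rw [← this]; exact norm_pochC _ (by norm_num) k
  have h2 : ‖pochC ((n:ℂ)+2) k‖ = prR ((n:ℝ)+2) k := by
    have : (((n:ℝ)+2 : ℝ) : ℂ) = ((n:ℂ)+2) := by push_cast; ring
    rw [← this]; exact norm_pochC _ (by positivity) k
  rw [aC, norm_div, h1, h2, div_le_one (prR_pos (by positivity) k)]
  exact (prR_mono (by norm_num) (by push_cast; linarith [Nat.cast_nonneg (α := ℝ) n]) k)

lemma summable_aC (n : ℕ) {t : ℂ} (ht : ‖t‖ < 1) : Summable (fun k => aC n k * t^k) := by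
  apply Summable.of_norm_bounded (g := fun k => ‖t‖^k)
  · exact summable_geometric_of_lt_one (norm_nonneg t) ht
  · intro k
    rw [norm_mul, norm_pow]
    exact mul_le_of_le_one_left (by positivity) (norm_aC_le n k)

lemma aC_zero (n : ℕ) : aC n 0 = 1 := by simp [aC, pochC_zero]

/-- key coefficient identity -/
lemma aC_rec (n k : ℕ) :
    2*((n:ℂ)+2) * aC n (k+1) = 2*((n:ℂ)+2) * aC n k - (2*(n:ℂ)+3) * aC (n+1) k := by
  have hP : pochC (1/2:ℂ) (k+1) = pochC (1/2) k * (1/2 + k) := pochC_succ _ _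
  have hQ : pochC ((n:ℂ)+2) (k+1) = pochC ((n:ℂ)+2) k * ((n:ℂ)+2+k) := pochC_succ _ _
  have hQ' : ((n:ℂ)+2) * pochC ((n:ℂ)+3) k = pochC ((n:ℂ)+2) k * ((n:ℂ)+2+k) := by
    have h := pochC_succ' ((n:ℂ)+2) k
    have h2 : ((n:ℂ)+2+1) = ((n:ℂ)+3) := by ring
    rw [h2] at h
    rw [← h]; exact hQ
  have hc : (((n:ℕ)+1 : ℕ) : ℂ) + 2 = (n:ℂ)+3 := by push_cast; ring
  have q1 := pochC_n2_ne n k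
  have q2 : ((n:ℂ)+2+k) ≠ 0 := by
    have h3 : (((n:ℝ)+2+k : ℝ) : ℂ) = ((n:ℂ)+2+k) := by push_cast; ring
    rw [← h3]
    exact_mod_cast (by positivity : (0:ℝ) < (n:ℝ)+2+k).ne'
  have q3 : ((n:ℂ)+2) ≠ 0 := by
    have h3 : (((n:ℝ)+2 : ℝ) : ℂ) = ((n:ℂ)+2) := by push_cast; ring
    rw [← h3]
    exact_mod_cast (by positivity : (0:ℝ) < (n:ℝ)+2).ne'
  have q4 : pochC ((n:ℂ)+3) k ≠ 0 := by
    intro h; rw [h, mul_zero] at hQ'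
    exact (mul_ne_zero q1 q2) hQ'.symm
  have e2 : aC (n+1) k = pochC (1/2) k * ((n:ℂ)+2) / (pochC ((n:ℂ)+2) k * ((n:ℂ)+2+k)) := by
    rw [aC, hc, div_eq_div_iff q4 (mul_ne_zero q1 q2)]
    rw [← hQ']; ring
  rw [e2]
  simp only [aC, hP, hQ]
  field_simp
  ring

lemma telescope_tsum {v : ℕ → ℂ} (hv : Filter.Tendsto v Filter.atTop (nhds 0))
    (hs : Summable (fun k => v k - v (k+1))) : ∑' k, (v k - v (k+1)) = v 0 := by
  have h1 := hs.hasSum.tendsto_sum_nat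
  have h2 : ∀ m : ℕ, ∑ i ∈ Finset.range m, (v i - v (i+1)) = v 0 - v m :=
    fun m => Finset.sum_range_sub' v m
  have h3 : Filter.Tendsto (fun m => ∑ i ∈ Finset.range m, (v i - v (i+1)))
      Filter.atTop (nhds (v 0)) := by
    simp only [h2]
    simpa using (tendsto_const_nhds (x := v 0)).sub hv
  exact tendsto_nhds_unique h1 h3

lemma FC_rec (n : ℕ) {t : ℂ} (ht : ‖t‖ < 1) :
    (2*(n:ℂ)+3) * t * FC (n+1) t + 2*((n:ℂ)+2) * ((1 - t) * FC n t) = 2*((n:ℂ)+2) := by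
  set v : ℕ → ℂ := fun k => 2*((n:ℂ)+2) * aC n k * t^k with hvdef
  have s0 : Summable (fun k => aC n k * t^k) := summable_aC _ ht
  have s1 : Summable (fun k => aC (n+1) k * t^k) := summable_aC _ ht
  have sv : Summable v := by
    simpa [hvdef, mul_assoc] using s0.mul_left (2*((n:ℂ)+2))
  have sv1 : Summable (fun k => v (k+1)) := (summable_nat_add_iff 1).mpr sv
  have key : ∀ k : ℕ, v k - v (k+1) =
      (2*(n:ℂ)+3) * t * (aC (n+1) k * t^k) + 2*((n:ℂ)+2) * ((1 - t) * (aC n k * t^k)) := by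
    intro k
    simp only [hvdef, pow_succ]
    linear_combination (-(t^k * t)) * aC_rec n k
  have hsum : ∑' k, (v k - v (k+1)) = (2*(n:ℂ)+3) * t * FC (n+1) t
      + 2*((n:ℂ)+2) * ((1 - t) * FC n t) := by
    have hA : (2*(n:ℂ)+3) * t * FC (n+1) t
        = ∑' k, (2*(n:ℂ)+3) * t * (aC (n+1) k * t^k) := by
      rw [FC, tsum_mul_left]
    have hB : 2*((n:ℂ)+2) * ((1 - t) * FC n t)
        = ∑' k, 2*((n:ℂ)+2) * ((1 - t) * (aC n k * t^k)) := by
      rw [FC, tsum_mul_left, tsum_mul_left]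
    rw [tsum_congr key, Summable.tsum_add (s1.mul_left _) ((s0.mul_left (1-t)).mul_left _), ← hA, ← hB]
  have htend : Filter.Tendsto (fun k => ‖2*((n:ℂ)+2)‖ * ‖t‖^k) Filter.atTop (nhds 0) := by
    simpa using (tendsto_pow_atTop_nhds_zero_of_lt_one (norm_nonneg t) ht).const_mul ‖2*((n:ℂ)+2)‖
  have hv0 : Filter.Tendsto v Filter.atTop (nhds 0) := by
    apply squeeze_zero_norm _ htend
    intro k
    simp only [hvdef, norm_mul, norm_pow]
    have h1 : (0:ℝ) ≤ ‖t‖^k := by positivity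
    nlinarith [norm_aC_le n k, norm_nonneg (aC n k),
      mul_nonneg (mul_nonneg (norm_nonneg (2:ℂ)) (norm_nonneg ((n:ℂ)+2))) h1]
  have := telescope_tsum hv0 (sv.sub sv1)
  rw [hsum] at this
  rw [this]
  simp [hvdef, aC_zero]

open Polynomial in
lemma desc_smeval_succ (x : ℂ) (k : ℕ) :
    (descPochhammer ℤ (k+1)).smeval x = (descPochhammer ℤ k).smeval x * (x - k) := by
  rw [descPochhammer_succ_right, smeval_mul, smeval_sub, smeval_X, smeval_natCast]
  simp

open Polynomial in
lemma desc_smeval_zero (x : ℂ) : (descPochhammer ℤ 0).smeval x = 1 := by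
  rw [descPochhammer_zero, smeval_one]; simp

lemma desc_val (k : ℕ) :
    (descPochhammer ℤ (k+1)).smeval (1/2 : ℂ) = (-1)^k * (1/2) * pochC (1/2) k := by
  induction k with
  | zero => rw [desc_smeval_succ, desc_smeval_zero]; simp [pochC_zero]
  | succ k ih =>
    rw [desc_smeval_succ, ih, pochC_succ]
    push_cast
    ring

/-- Ring.choose (1/2) (k+1) explicitly -/
lemma choose_half (k : ℕ) :
    Ring.choose (1/2 : ℂ) (k+1) = (-1)^k * (1/2) * pochC (1/2) k / ((k+1).factorial : ℂ) := by
  have h := Ring.descPochhammer_eq_factorial_smul_choose (1/2 : ℂ) (k+1)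
  rw [desc_val] at h
  have hf : ((k+1).factorial : ℂ) ≠ 0 := by exact_mod_cast (Nat.factorial_pos (k+1)).ne'
  rw [eq_div_iff hf]
  rw [h, nsmul_eq_mul]
  ring

noncomputable def eC : ℕ → ℂ
  | 0 => 1
  | (k+1) => -(1/2) * pochC (1/2) k / ((k+1).factorial : ℂ)

lemma eC_eq (k : ℕ) : eC k = (-1)^k * Ring.choose (1/2:ℂ) k := by
  cases k with
  | zero => simp [eC, Ring.choose_zero_right]
  | succ k =>
    rw [eC, choose_half]
    ring_nf
    rw [mul_comm k 2, pow_mul]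
    norm_num

lemma vand (m : ℕ) :
    ∑ ij ∈ Finset.HasAntidiagonal.antidiagonal m, eC ij.1 * eC ij.2 = (-1)^m * (Nat.choose 1 m : ℂ) := by
  have h1 : ∑ ij ∈ Finset.HasAntidiagonal.antidiagonal m, eC ij.1 * eC ij.2
      = ∑ ij ∈ Finset.HasAntidiagonal.antidiagonal m, (-1)^m * (Ring.choose (1/2:ℂ) ij.1 * Ring.choose (1/2:ℂ) ij.2) := by
    apply Finset.sum_congr rfl
    intro ij hij
    have hm : ij.1 + ij.2 = m := Finset.HasAntidiagonal.mem_antidiagonal.mp hij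
    rw [eC_eq, eC_eq, ← hm, pow_add]
    ring
  rw [h1, ← Finset.mul_sum, ← Ring.add_choose_eq m (Commute.all _ _)]
  congr 1
  rw [show (1/2 : ℂ) + 1/2 = ((1:ℕ):ℂ) by norm_num, Ring.choose_natCast]

lemma norm_eC_le (k : ℕ) : ‖eC k‖ ≤ 1 := by
  cases k with
  | zero => simp [eC]
  | succ k =>
    rw [eC]
    have h1 : ‖pochC (1/2 : ℂ) k‖ = prR (1/2) k := by
      have : ((1/2 : ℝ) : ℂ) = (1/2 : ℂ) := by push_cast; ring
      rw [← this]; exact norm_pochC _ (by norm_num) k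
    have h2 : prR (1/2) k ≤ k.factorial := by
      have := prR_mono (x := 1/2) (y := 1) (by norm_num) (by norm_num) k
      rwa [prR_one] at this
    have h3 : (0:ℝ) < k.factorial := by exact_mod_cast Nat.factorial_pos k
    have h4 : (k.factorial : ℝ) ≤ ((k+1).factorial : ℝ) := by
      exact_mod_cast Nat.factorial_le (Nat.le_succ k)
    rw [norm_div, norm_mul, h1]
    have h5 : ‖((k+1).factorial : ℂ)‖ = ((k+1).factorial : ℝ) := by
      rw [show ((k+1).factorial : ℂ) = (((k+1).factorial : ℝ) : ℂ) by push_cast; ring,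
        Complex.norm_real, Real.norm_eq_abs, abs_of_pos (by exact_mod_cast Nat.factorial_pos _)]
    rw [h5, div_le_one (by exact_mod_cast Nat.factorial_pos (k+1))]
    have h6 : ‖(-(1/2) : ℂ)‖ = 1/2 := by norm_num
    rw [h6]
    have := prR_pos (x := 1/2) (by norm_num) k
    nlinarith

lemma summable_eC {t : ℂ} (ht : ‖t‖ < 1) : Summable (fun k => eC k * t^k) := by
  apply Summable.of_norm_bounded (g := fun k => ‖t‖^k)
  · exact summable_geometric_of_lt_one (norm_nonneg t) ht
  · intro k
    rw [norm_mul, norm_pow]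
    exact mul_le_of_le_one_left (by positivity) (norm_eC_le k)

lemma summable_eC_norm {t : ℂ} (ht : ‖t‖ < 1) : Summable (fun k => ‖eC k * t^k‖) := by
  apply Summable.of_nonneg_of_le (fun k => norm_nonneg _) (fun k => ?_)
    (summable_geometric_of_lt_one (norm_nonneg t) ht)
  rw [norm_mul, norm_pow]
  exact mul_le_of_le_one_left (by positivity) (norm_eC_le k)

noncomputable def WC (t : ℂ) : ℂ := ∑' k : ℕ, eC k * t^k

lemma WC_sq {t : ℂ} (ht : ‖t‖ < 1) : WC t * WC t = 1 - t := by
  rw [WC, tsum_mul_tsum_eq_tsum_sum_antidiagonal_of_summable_norm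
    (summable_eC_norm ht) (summable_eC_norm ht)]
  have h1 : ∀ m : ℕ, ∑ kl ∈ Finset.HasAntidiagonal.antidiagonal m, (eC kl.1 * t^kl.1) * (eC kl.2 * t^kl.2)
      = (-1)^m * (Nat.choose 1 m : ℂ) * t^m := by
    intro m
    rw [← vand m, Finset.sum_mul]
    apply Finset.sum_congr rfl
    intro ij hij
    have hm : ij.1 + ij.2 = m := Finset.HasAntidiagonal.mem_antidiagonal.mp hij
    rw [← hm, pow_add]
    ring
  rw [tsum_congr h1]
  rw [tsum_eq_sum (s := {0, 1}) (by
    intro m hm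
    have h2 : 2 ≤ m := by
      rcases Nat.lt_or_ge m 2 with h | h
      · interval_cases m <;> simp_all
      · exact h
    have : Nat.choose 1 m = 0 := Nat.choose_eq_zero_of_lt h2
    simp [this])]
  norm_num
  ring

lemma FC0_term (k : ℕ) : aC 0 k = pochC (1/2) k / ((k+1).factorial : ℂ) := by
  rw [aC, show ((0:ℕ):ℂ) + 2 = 2 by norm_num, pochC_two]

lemma WC_eq {t : ℂ} (ht : ‖t‖ < 1) : WC t = 1 - t/2 * FC 0 t := by
  rw [WC, Summable.tsum_eq_zero_add (summable_eC ht)]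
  have h1 : ∀ k : ℕ, eC (k+1) * t^(k+1) = (-(t/2)) * (aC 0 k * t^k) := by
    intro k
    rw [eC, FC0_term, pow_succ]
    ring
  rw [tsum_congr h1, tsum_mul_left, ← FC]
  simp [eC]
  ring

noncomputable def rR (k : ℕ) : ℝ := prR (1/2) k / ((k+1).factorial : ℝ)

lemma rR_partial (N : ℕ) :
    ∑ k ∈ Finset.range N, rR k = 2 - 2 * prR (1/2) N / (N.factorial : ℝ) := by
  induction N with
  | zero => simp [prR_zero]
  | succ N ih =>
    rw [Finset.sum_range_succ, ih, rR, prR_succ]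
    have h1 : (N.factorial : ℝ) ≠ 0 := by exact_mod_cast (Nat.factorial_pos N).ne'
    have h2 : ((N+1).factorial : ℝ) ≠ 0 := by exact_mod_cast (Nat.factorial_pos (N+1)).ne'
    have h3 : ((N+1).factorial : ℝ) = (N+1) * (N.factorial : ℝ) := by
      rw [Nat.factorial_succ]; push_cast; ring
    rw [h3]
    field_simp
    ring

lemma rR_nonneg (k : ℕ) : 0 ≤ rR k := by
  have := prR_pos (x := 1/2) (by norm_num) k
  have : (0:ℝ) < (k+1).factorial := by exact_mod_cast Nat.factorial_pos (k+1)
  rw [rR]; positivity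

lemma rR_sum_le (N : ℕ) : ∑ k ∈ Finset.range N, rR k ≤ 2 := by
  rw [rR_partial]
  have h1 := prR_pos (x := 1/2) (by norm_num) N
  have h2 : (0:ℝ) < N.factorial := by exact_mod_cast Nat.factorial_pos N
  have : 0 < 2 * prR (1/2) N / (N.factorial : ℝ) := by positivity
  linarith

lemma summable_rR : Summable rR := summable_of_sum_range_le rR_nonneg rR_sum_le

lemma tsum_rR_le : ∑' k, rR k ≤ 2 := Summable.tsum_le_of_sum_range_le summable_rR rR_sum_le

lemma norm_aC0_le_rR {t : ℂ} (ht : ‖t‖ < 1) (k : ℕ) : ‖aC 0 k * t^k‖ ≤ rR k := by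
  rw [norm_mul, norm_pow, FC0_term, norm_div, rR]
  have h1 : ‖pochC (1/2 : ℂ) k‖ = prR (1/2) k := by
    have : ((1/2 : ℝ) : ℂ) = (1/2 : ℂ) := by push_cast; ring
    rw [← this]; exact norm_pochC _ (by norm_num) k
  have h2 : ‖((k+1).factorial : ℂ)‖ = ((k+1).factorial : ℝ) := by
    rw [show ((k+1).factorial : ℂ) = (((k+1).factorial : ℝ) : ℂ) by push_cast; ring,
      Complex.norm_real, Real.norm_eq_abs, abs_of_pos (by exact_mod_cast Nat.factorial_pos _)]
  rw [h1, h2]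
  have h3 : ‖t‖^k ≤ 1 := pow_le_one₀ (norm_nonneg t) ht.le
  have h4 : (0:ℝ) < (k+1).factorial := by exact_mod_cast Nat.factorial_pos (k+1)
  have h5 := prR_pos (x := 1/2) (by norm_num) k
  have h6 : 0 ≤ prR (1/2) k / ((k+1).factorial : ℝ) := by positivity
  calc prR (1/2) k / ((k+1).factorial : ℝ) * ‖t‖^k ≤ prR (1/2) k / ((k+1).factorial : ℝ) * 1 := by
        apply mul_le_mul_of_nonneg_left h3 h6
    _ = prR (1/2) k / ((k+1).factorial : ℝ) := by ring

lemma norm_FC0_le {t : ℂ} (ht : ‖t‖ < 1) : ‖FC 0 t‖ ≤ 2 := by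
  rw [FC]
  calc ‖∑' k, aC 0 k * t^k‖ ≤ ∑' k, ‖aC 0 k * t^k‖ := by
        apply norm_tsum_le_tsum_norm
        exact summable_rR.of_nonneg_of_le (fun k => norm_nonneg _) (norm_aC0_le_rR ht)
    _ ≤ ∑' k, rR k := by
        apply Summable.tsum_le_tsum (norm_aC0_le_rR ht)
          (summable_rR.of_nonneg_of_le (fun k => norm_nonneg _) (norm_aC0_le_rR ht)) summable_rR
    _ ≤ 2 := tsum_rR_le

lemma re_WC_pos {t : ℂ} (ht : ‖t‖ < 1) : 0 < (WC t).re := by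
  rw [WC_eq ht]
  have h1 : ‖t/2 * FC 0 t‖ ≤ ‖t‖ := by
    have he : ‖t/2 * FC 0 t‖ = ‖t‖/2 * ‖FC 0 t‖ := by
      rw [norm_mul, norm_div]; norm_num
    rw [he]
    have := norm_FC0_le ht
    have h2 := norm_nonneg t
    have h3 := norm_nonneg (FC 0 t)
    nlinarith
  have h4 : (t/2 * FC 0 t).re ≤ ‖t/2 * FC 0 t‖ := Complex.re_le_norm _
  simp only [Complex.sub_re, Complex.one_re]
  linarith

lemma sqrt_unique {z w : ℂ} (hz : 0 < z.re) (hw : w * w = z) (hwre : 0 < w.re) :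
    w = z ^ ((1:ℂ)/2) := by
  have hz0 : z ≠ 0 := by
    intro h; rw [h] at hz; simp at hz
  set v := z ^ ((1:ℂ)/2) with hv
  have hvv : v * v = z := by
    rw [hv, ← Complex.cpow_add _ _ hz0]
    norm_num
  have hvre : 0 < v.re := by
    rw [hv, Complex.cpow_def_of_ne_zero hz0, Complex.exp_re]
    have harg : |z.arg| < Real.pi / 2 := Complex.abs_arg_lt_pi_div_two_iff.mpr (Or.inl hz)
    have him : (Complex.log z * (1/2)).im = z.arg / 2 := by
      simp [Complex.mul_im, Complex.log_im]
      ring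
    rw [him]
    have hpi := Real.pi_pos
    have habs := abs_lt.mp harg
    have hcos : 0 < Real.cos (z.arg / 2) := by
      apply Real.cos_pos_of_mem_Ioo
      constructor <;> [linarith; linarith]
    positivity
  have : (w - v) * (w + v) = 0 := by
    rw [mul_comm] at hw
    linear_combination hw - hvv
  rcases mul_eq_zero.mp this with h | h
  · exact sub_eq_zero.mp h
  · have : w = -v := by linear_combination h
    rw [this] at hwre
    simp at hwre
    linarith

lemma FC0_val {t : ℂ} (ht : ‖t‖ < 1) (ht0 : t ≠ 0) :
    FC 0 t = 2 * (1 - (1-t) ^ ((1:ℂ)/2)) / t := by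
  have hre : 0 < (1-t).re := by
    have h1 : t.re ≤ ‖t‖ := Complex.re_le_norm t
    simp only [Complex.sub_re, Complex.one_re]
    linarith
  have hw : WC t = (1-t) ^ ((1:ℂ)/2) := sqrt_unique hre (WC_sq ht) (re_WC_pos ht)
  have h2 := WC_eq ht
  rw [hw] at h2
  field_simp
  linear_combination (2 : ℂ) * h2

noncomputable def RC (n : ℕ) (t : ℂ) : ℂ :=
  2 * ((n + 1).factorial : ℂ) / (pochC (3/2) n * (1 - t) ^ ((1 : ℂ)/2)) *
    ((t - 1) / t) ^ (n + 1) *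
    (1 - 1 / (1 - t) ^ ((1 : ℂ)/2) *
      ∑ k ∈ Finset.range (n + 1), pochC (1/2) k / (k.factorial : ℂ) * (t / (t - 1)) ^ k)

lemma one_sub_ne {t : ℂ} (ht : ‖t‖ < 1) : (1:ℂ) - t ≠ 0 := by
  intro h
  have : t = 1 := by linear_combination -h
  rw [this] at ht; simp at ht

lemma pochC_32_ne (n : ℕ) : pochC (3/2 : ℂ) n ≠ 0 := by
  have : ((3/2 : ℝ) : ℂ) = (3/2 : ℂ) := by push_cast; ring
  rw [← this]; exact pochC_ne_zero (by norm_num) n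

lemma pochC_half_succ (n : ℕ) : pochC (1/2 : ℂ) (n+1) = (1/2) * pochC (3/2) n := by
  have := pochC_succ' (1/2 : ℂ) n
  rw [show (1/2 : ℂ) + 1 = 3/2 by norm_num] at this
  exact this

lemma step_algebra (ν w X S P3 fn : ℂ) (hw0 : w ≠ 0) (hX0 : X ≠ 0)
    (ht0 : 1 - w*w ≠ 0) (hP3 : P3 ≠ 0) (h32 : (3:ℂ)/2+ν ≠ 0) (h23 : 2*ν+3 ≠ 0) (hfn : fn ≠ 0) :
    (2*ν+3) * ((1-w*w)) * (2*((ν+2)*fn) / (P3*(3/2+ν) * w) * (X*(((1-w*w)-1)/(1-w*w))) *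
        (1 - 1/w*(S + (1/2)*P3/fn * (1/X))))
      + 2*(ν+2) * ((1-(1-w*w)) * (2*fn/(P3*w) * X * (1 - 1/w*S))) = 2*(ν+2) := by
  have hD : ν * w ^ 2 * fn * X * P3 * 4 - ν * w ^ 4 * fn * X * P3 * 4 +
      (w ^ 2 * fn * X * P3 * 6 - w ^ 4 * fn * X * P3 * 6) ≠ 0 := by
    have he : ν * w ^ 2 * fn * X * P3 * 4 - ν * w ^ 4 * fn * X * P3 * 4 +
        (w ^ 2 * fn * X * P3 * 6 - w ^ 4 * fn * X * P3 * 6)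
        = (2*ν+3)*(1-w*w)*(w*w)*fn*X*P3*2 := by ring
    rw [he]
    exact mul_ne_zero (mul_ne_zero (mul_ne_zero (mul_ne_zero (mul_ne_zero
      (mul_ne_zero h23 ht0) (mul_ne_zero hw0 hw0)) hfn) hX0) hP3) two_ne_zero
  have hden : P3 * (3 + ν * 2) * w * (1 - w * w) * (w * (2 * fn * X)) ≠ 0 := by
    have h23' : (3 : ℂ) + ν * 2 ≠ 0 := by intro h; apply h23; linear_combination h
    exact mul_ne_zero (mul_ne_zero (mul_ne_zero (mul_ne_zero hP3 h23') hw0) ht0)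
      (mul_ne_zero hw0 (mul_ne_zero (mul_ne_zero two_ne_zero hfn) hX0))
  field_simp [show (1:ℂ) - w^2 ≠ 0 by rw [sq]; exact ht0,
    show (3:ℂ) + 2*ν ≠ 0 by rw [add_comm]; exact h23]
  ring

lemma RC_rec (n : ℕ) {t : ℂ} (ht : ‖t‖ < 1) (ht0 : t ≠ 0) :
    (2*(n:ℂ)+3) * t * RC (n+1) t + 2*((n:ℂ)+2) * ((1 - t) * RC n t) = 2*((n:ℂ)+2) := by
  have ht1 : (1:ℂ) - t ≠ 0 := one_sub_ne ht
  have htm1 : t - 1 ≠ 0 := by intro h; apply ht1; linear_combination -h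
  set w := (1-t) ^ ((1:ℂ)/2) with hwdef
  have hww : w * w = 1 - t := by
    rw [hwdef, ← Complex.cpow_add _ _ ht1]; norm_num
  have hw0 : w ≠ 0 := by
    intro h; rw [h, mul_zero] at hww; exact ht1 hww.symm
  have hP3 : pochC (3/2 : ℂ) n ≠ 0 := pochC_32_ne n
  have h32 : ((3:ℂ)/2 + n) ≠ 0 := by
    have : ((3/2 + n : ℝ) : ℂ) = (3/2 + (n:ℂ)) := by push_cast; ring
    rw [show ((3:ℂ)/2 + (n:ℂ)) = ((3/2 + n : ℝ) : ℂ) by push_cast; ring]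
    exact_mod_cast (by positivity : (0:ℝ) < 3/2 + n).ne'
  have hfn : (((n+1).factorial : ℕ) : ℂ) ≠ 0 := by
    exact_mod_cast (Nat.factorial_pos (n+1)).ne'
  have hfact : (((n+1+1).factorial : ℕ) : ℂ) = ((n:ℂ)+2) * ((n+1).factorial : ℂ) := by
    rw [Nat.factorial_succ]; push_cast; ring
  have hp3succ : pochC (3/2 : ℂ) (n+1) = pochC (3/2) n * (3/2 + n) := pochC_succ _ _
  set S := ∑ k ∈ Finset.range (n + 1), pochC (1/2 : ℂ) k / (k.factorial : ℂ) * (t / (t - 1)) ^ k with hS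
  set X := ((t-1)/t)^(n+1) with hX
  set Y := (t/(t-1))^(n+1) with hY
  have hXY : X * Y = 1 := by
    rw [hX, hY, ← mul_pow, div_mul_div_comm, mul_comm (t-1) t, div_self (by
      exact mul_ne_zero ht0 htm1), one_pow]
  have hX0 : X ≠ 0 := by
    intro h; rw [h, zero_mul] at hXY; exact zero_ne_one hXY
  have hYX : Y = 1/X := by
    rw [eq_div_iff hX0]; linear_combination hXY
  have hteq : t = 1 - w*w := by linear_combination hww
  have ht0' : (1:ℂ) - w*w ≠ 0 := by
    rw [show (1:ℂ) - w*w = t from by linear_combination -hww]; exact ht0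
  have h23 : 2*(n:ℂ)+3 ≠ 0 := by
    rw [show 2*(n:ℂ)+3 = 2*((3:ℂ)/2+(n:ℂ)) from by ring]
    exact mul_ne_zero two_ne_zero h32
  simp only [RC, Finset.sum_range_succ, ← hS, ← hX, ← hY, ← hwdef, hfact, hp3succ,
    pochC_half_succ, pow_succ]
  rw [hYX, hteq]
  linear_combination step_algebra (n:ℂ) w X S (pochC (3/2) n) ((n+1).factorial : ℂ)
    hw0 hX0 ht0' hP3 h32 h23 hfn

lemma RC_zero {t : ℂ} (ht : ‖t‖ < 1) (ht0 : t ≠ 0) : FC 0 t = RC 0 t := by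
  have ht1 : (1:ℂ) - t ≠ 0 := one_sub_ne ht
  have htm1 : t - 1 ≠ 0 := by intro h; apply ht1; linear_combination -h
  set w := (1-t) ^ ((1:ℂ)/2) with hwdef
  have hww : w * w = 1 - t := by
    rw [hwdef, ← Complex.cpow_add _ _ ht1]; norm_num
  have hw0 : w ≠ 0 := by
    intro h; rw [h, mul_zero] at hww; exact ht1 hww.symm
  rw [FC0_val ht ht0, RC, ← hwdef]
  rw [Finset.sum_range_one]
  have hp0 : pochC (1/2 : ℂ) 0 = 1 := Finset.prod_range_zero _
  have hp0' : pochC (3/2 : ℂ) 0 = 1 := Finset.prod_range_zero _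
  rw [hp0, hp0']
  norm_num
  field_simp
  linear_combination (1 - w) * hww

lemma FC_eq_RC (n : ℕ) : ∀ t : ℂ, ‖t‖ < 1 → t ≠ 0 → FC n t = RC n t := by
  induction n with
  | zero => exact fun t ht ht0 => RC_zero ht ht0
  | succ n ih =>
    intro t ht ht0
    have h1 := FC_rec n ht
    rw [ih t ht ht0] at h1
    have h2 := RC_rec n ht ht0
    have h3 : (2*(n:ℂ)+3) * t * (FC (n+1) t - RC (n+1) t) = 0 := by
      linear_combination h1 - h2
    have h23 : (2*(n:ℂ)+3) ≠ 0 := by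
      rw [show 2*(n:ℂ)+3 = ((2*(n:ℝ)+3 : ℝ) : ℂ) by push_cast; ring]
      exact_mod_cast (by positivity : (0:ℝ) < 2*(n:ℝ)+3).ne'
    rcases mul_eq_zero.mp h3 with h | h
    · exact absurd h (mul_ne_zero h23 ht0)
    · exact sub_eq_zero.mp h

theorem reduction_third_diff (n : ℕ) (t : ℂ) (ht : ‖t‖ < 1) (ht0 : t ≠ 0) :
    hyp2F1 (1/2) 1 (2 + n) t =
      2 * ((n + 1).factorial : ℂ) / (pochC (3/2) n * (1 - t) ^ ((1 : ℂ)/2)) *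
        ((t - 1) / t) ^ (n + 1) *
        (1 - 1 / (1 - t) ^ ((1 : ℂ)/2) *
          ∑ k ∈ Finset.range (n + 1), pochC (1/2) k / (k.factorial : ℂ) * (t / (t - 1)) ^ k) := by
  have h1 : hyp2F1 (1/2) 1 (2 + n) t = FC n t := by
    rw [hyp2F1, FC]
    apply tsum_congr
    intro k
    have hk : (k.factorial : ℂ) ≠ 0 := by exact_mod_cast (Nat.factorial_pos k).ne'
    rw [show ((2:ℂ) + n) = ((n:ℂ)+2) by ring, pochC_one, aC,
      mul_div_mul_right _ _ hk]
  rw [h1, FC_eq_RC n t ht ht0, RC]
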